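/- Let X and Y be stiff complete simplicial sets and f : Y → X a simplicial map. The following are equivalent: (1) f is conservative; (2) f preserves the word splitting, i.e. f maps Y_w into X_w for every n and every word w ∈ {0,a}^n; (3) f_1 maps Y_a into X_a. -/

import Mathlib

open CategoryTheory CategoryTheory.Limits Simplicial Opposite

/-- A map in the simplex category is *generic* if it preserves the endpoints. -/
def IsGeneric {a b : SimplexCategory} (g : a ⟶ b) : Prop :=
  g.toOrderHom 0 = 0 ∧ g.toOrderHom (Fin.last a.len) = Fin.last b.len

/-- A map in the simplex category is *free* if it is distance preserving. -/
def IsFree {a b : SimplexCategory} (f : a ⟶ b) : Prop :=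
  ∀ i : Fin (a.len + 1), (f.toOrderHom i : ℕ) = (f.toOrderHom 0 : ℕ) + (i : ℕ)

/-- A decomposition space is a simplicial set carrying every pushout in `Δ` of a
generic map `g` along a free map `f` to a pullback of sets. -/
def IsDecomposition (X : SSet) : Prop :=
  ∀ ⦃a b c d : SimplexCategory⦄ (g : a ⟶ b) (f : a ⟶ c) (h : b ⟶ d) (k : c ⟶ d),
    IsGeneric g → IsFree f → IsPushout g f h k →
    IsPullback (X.map h.op) (X.map k.op) (X.map g.op) (X.map f.op)

/-- A simplicial set is *complete* if all degeneracy maps are injective. -/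
def Complete (X : SSet) : Prop :=
  ∀ (n : ℕ) (i : Fin (n + 1)), Function.Injective (X.σ i : X _⦋n⦌ ⟶ X _⦋n + 1⦌)

/-- The free map `[1] → [n]` sending `0, 1` to `i, i+1`; it induces the map
taking the `i`-th principal edge (`0`-indexed) of an `n`-simplex. -/
def principalEdge (n : ℕ) (i : Fin n) : (⦋1⦌ : SimplexCategory) ⟶ ⦋n⦌ :=
  SimplexCategory.mkHom
    { toFun := fun j => ⟨i.1 + j.1, by have := i.2; have := j.2; omega⟩
      monotone' := fun a b h => by
        simp only [Fin.mk_le_mk]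
        exact Nat.add_le_add_left h i.1 }

/-- The unique generic map `[1] → [n]` (`0 ↦ 0`, `1 ↦ n`); it induces the map
taking the long edge of an `n`-simplex. -/
def longEdgeMap (n : ℕ) : (⦋1⦌ : SimplexCategory) ⟶ ⦋n⦌ :=
  SimplexCategory.mkHom
    { toFun := fun j => ⟨j.1 * n, by
        have h := j.2
        have : j.1 * n ≤ 1 * n := Nat.mul_le_mul_right n (by omega)
        omega⟩
      monotone' := fun a b h => by
        simp only [Fin.mk_le_mk]
        exact Nat.mul_le_mul_right n h }

/-- The alphabet `{0, 1, a}`: `z` prescribes a degenerate principal edge, `o` an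
unrestricted one, `a` a nondegenerate one. -/
inductive Letter where
  | z
  | o
  | a
  deriving DecidableEq

/-- The subset of `X₁` prescribed by a letter. -/
def edgeSet (X : SSet) : Letter → Set (X _⦋1⦌) := fun l => match l with
  | .z => Set.range (X.σ (0 : Fin 1))
  | .o => Set.univ
  | .a => (Set.range (X.σ (0 : Fin 1)))ᶜ

/-- `X_w`, the set of `n`-simplices whose principal edges have the types
prescribed by the word `w`. -/
def wordSet (X : SSet) {n : ℕ} (w : Fin n → Letter) : Set (X _⦋n⦌) :=
  {σ | ∀ i : Fin n, X.map (principalEdge n i).op σ ∈ edgeSet X (w i)}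

/-- A simplex is *effective* if all its principal edges are nondegenerate. -/
def Effective (X : SSet) {n : ℕ} (σ : X _⦋n⦌) : Prop :=
  ∀ i : Fin n, X.map (principalEdge n i).op σ ∉ Set.range (X.σ (0 : Fin 1))

/-- The constant word `aa⋯a`. -/
def allA (n : ℕ) : Fin n → Letter := fun _ => Letter.a

/-- Concatenation of words. -/
def concatW {m n : ℕ} (v : Fin m → Letter) (v' : Fin n → Letter) : Fin (m + n) → Letter :=
  fun i => if h : i.1 < m then v ⟨i.1, h⟩ else v' ⟨i.1 - m, by have := i.2; omega⟩

/-- The word `v ℓ v'` obtained by splicing a letter `ℓ` between the words `v` and `v'`. -/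
def splice {m n : ℕ} (v : Fin m → Letter) (l : Letter) (v' : Fin n → Letter) :
    Fin (m + n + 1) → Letter :=
  fun i => if h : i.1 < m then v ⟨i.1, h⟩
    else if h2 : i.1 = m then l
    else v' ⟨i.1 - (m + 1), by have := i.2; omega⟩

/-- A simplex (of positive dimension) is degenerate if it is in the image of some
degeneracy map. -/
def Degen (X : SSet) {n : ℕ} (σ : X _⦋n + 1⦌) : Prop :=
  ∃ i : Fin (n + 1), σ ∈ Set.range (X.σ i)

/-- A simplicial map is *cULF* if its naturality squares on all generic maps are
pullbacks. -/
def IsCULF {Y X : SSet} (f : Y ⟶ X) : Prop :=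
  ∀ ⦃a b : SimplexCategory⦄ (g : a ⟶ b), IsGeneric g →
    IsPullback (f.app (op b)) (Y.map g.op) (X.map g.op) (f.app (op a))

/-- A simplicial map is *conservative* if its naturality squares on all degeneracy
maps are pullbacks. -/
def Conservative {Y X : SSet} (f : Y ⟶ X) : Prop :=
  ∀ (n : ℕ) (i : Fin (n + 1)),
    IsPullback (f.app (op (SimplexCategory.mk n))) (Y.σ i) (X.σ i)
      (f.app (op (SimplexCategory.mk (n + 1))))

/-- A simplicial set is *stiff* if it carries every pushout in `Δ` of a codegeneracy
map along a free map to a pullback of sets. -/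
def Stiff (X : SSet) : Prop :=
  ∀ (k : ℕ) (i : Fin (k + 1)) ⦃c d : SimplexCategory⦄
    (f : SimplexCategory.mk (k + 1) ⟶ c) (h : SimplexCategory.mk k ⟶ d) (j : c ⟶ d),
    IsFree f → IsPushout (SimplexCategory.σ i) f h j →
    IsPullback (X.map h.op) (X.map j.op) (X.map (SimplexCategory.σ i).op) (X.map f.op)

/-- The map `[0] → [n]` picking out the vertex `i`. -/
def vertexMap (n : ℕ) (i : Fin (n + 1)) : (⦋0⦌ : SimplexCategory) ⟶ ⦋n⦌ :=
  SimplexCategory.mkHom ⟨fun _ => i, fun _ _ _ => le_refl _⟩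

/-- The unique map `[n] → [0]`; it induces the iterated degeneracy `X₀ → Xₙ`. -/
def toZero (n : ℕ) : (⦋n⦌ : SimplexCategory) ⟶ ⦋0⦌ :=
  SimplexCategory.mkHom ⟨fun _ => 0, fun _ _ _ => le_refl _⟩

/-- The generic map `[2] → [m+n]` sending `0,1,2` to `0,m,m+n`. -/
def midMap (m n : ℕ) : (⦋2⦌ : SimplexCategory) ⟶ ⦋m + n⦌ :=
  SimplexCategory.mkHom
    { toFun := fun j => ⟨if j.1 = 0 then 0 else if j.1 = 1 then m else m + n, by
        split
        · omega
        · split <;> omega⟩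
      monotone' := by
        intro a b hab
        have h : a.1 ≤ b.1 := hab
        have ha := a.2
        have hb := b.2
        simp only [Fin.mk_le_mk]
        split <;> split <;> (try split) <;> (try split) <;> omega }

/-- The free map `[m] → [m+n]` onto the initial segment. -/
def freeInitial (m n : ℕ) : (⦋m⦌ : SimplexCategory) ⟶ ⦋m + n⦌ :=
  SimplexCategory.mkHom ⟨fun i => ⟨i.1, by have := i.2; omega⟩, fun a b h => h⟩

/-- The free map `[n] → [m+n]` onto the final segment. -/
def freeFinal (m n : ℕ) : (⦋n⦌ : SimplexCategory) ⟶ ⦋m + n⦌ :=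
  SimplexCategory.mkHom ⟨fun i => ⟨m + i.1, by have := i.2; omega⟩,
    fun a b h => by
      simp only [Fin.mk_le_mk]
      exact Nat.add_le_add_left h m⟩

/-- The word `1aa⋯a` (`n` letters `a`). -/
def oneA (n : ℕ) : Fin (n + 1) → Letter := fun i => if i.1 = 0 then Letter.o else Letter.a

/-- The word `0aa⋯a` (`n` letters `a`). -/
def zeroA (n : ℕ) : Fin (n + 1) → Letter := fun i => if i.1 = 0 then Letter.z else Letter.a

/-- The word `aa⋯a1` (`n` letters `a`). -/
def aOne (n : ℕ) : Fin (n + 1) → Letter := fun i => if i.1 = n then Letter.o else Letter.a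

/-- The word `aa⋯a0` (`n` letters `a`). -/
def aZero (n : ℕ) : Fin (n + 1) → Letter := fun i => if i.1 = n then Letter.z else Letter.a

/-- The number of letters `0` in a word. -/
def zcount {n : ℕ} (w : Fin n → Letter) : ℕ :=
  (Finset.univ.filter fun i => w i = Letter.z).card

/-- The surjection `[n] → [n - zcount w]` collapsing, for each position `j` with
`w j = 0`, the vertex `j+1` onto the vertex `j`; the induced map
`X_{n - zcount w} → X_n` is the iterated degeneracy `s_{j_k} ⋯ s_{j_1}` where
`j_1 < ⋯ < j_k` are the positions of the letters `0` of `w`. -/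
def collapseMap {n : ℕ} (w : Fin n → Letter) :
    (⦋n⦌ : SimplexCategory) ⟶ ⦋n - zcount w⦌ :=
  SimplexCategory.mkHom
    { toFun := fun t =>
        ⟨(Finset.univ.filter fun i : Fin n => i.1 < t.1 ∧ ¬ (w i = Letter.z)).card, by
          have h2 := Finset.card_filter_add_card_filter_not
            (s := (Finset.univ : Finset (Fin n))) (p := fun i => w i = Letter.z)
          have h1 : (Finset.univ.filter fun i : Fin n => i.1 < t.1 ∧ ¬ (w i = Letter.z)).card
              ≤ (Finset.univ.filter fun i : Fin n => ¬ (w i = Letter.z)).card :=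
            Finset.card_le_card (fun x hx => by
              simp only [Finset.mem_filter] at hx ⊢
              exact ⟨hx.1, hx.2.2⟩)
          have h3 : zcount w = (Finset.univ.filter fun i : Fin n => w i = Letter.z).card := rfl
          simp only [Finset.card_univ, Fintype.card_fin] at h2
          omega⟩
      monotone' := by
        intro a b hab
        have h : a.1 ≤ b.1 := hab
        simp only [Fin.mk_le_mk]
        exact Finset.card_le_card (fun x hx => by
          simp only [Finset.mem_filter] at hx ⊢
          exact ⟨hx.1, lt_of_lt_of_le hx.2.1 h, hx.2.2⟩) }

/-- An edge has finite length if there is a bound on the dimensions of the effective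
simplices having it as long edge. -/
def FiniteLength (X : SSet) (a : X _⦋1⦌) : Prop :=
  ∃ N : ℕ, ∀ (n : ℕ) (σ : X _⦋n⦌), Effective X σ →
    X.map (longEdgeMap n).op σ = a → n ≤ N

/-- A *tight* decomposition space: a complete decomposition space in which every edge
has finite length. -/
def Tight (X : SSet) : Prop :=
  IsDecomposition X ∧ Function.Injective (X.σ (0 : Fin 1) : X _⦋0⦌ ⟶ X _⦋1⦌) ∧
    ∀ a : X _⦋1⦌, FiniteLength X a

/-- The length of an edge: the supremum of the dimensions of effective simplices
having it as long edge. -/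
noncomputable def edgeLength (X : SSet) (a : X _⦋1⦌) : ℕ :=
  sSup (Set.ofPred fun n : ℕ => ∃ σ : X _⦋n⦌, Effective X σ ∧ X.map (longEdgeMap n).op σ = a)

/-- A complete simplicial set is *split* if all face maps preserve nondegenerate
simplices. -/
def Split (X : SSet) : Prop :=
  Complete X ∧ ∀ (n : ℕ) (i : Fin (n + 3)) (σ : X _⦋n + 2⦌),
    ¬ Degen X σ → ¬ Degen X (X.δ i σ)

/-- The counit: the indicator function of the degenerate edges. -/
noncomputable def epsFun (X : SSet) : X _⦋1⦌ → ℚ := fun f =>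
  haveI := Classical.propDecidable (f ∈ Set.range (X.σ (0 : Fin 1)))
  if f ∈ Set.range (X.σ (0 : Fin 1)) then 1 else 0

/-- Convolution product on `ℚ`-valued functions on `X₁`. -/
noncomputable def convFun (X : SSet) (φ ψ : X _⦋1⦌ → ℚ) : X _⦋1⦌ → ℚ :=
  fun f => ∑ᶠ σ ∈ (fun τ => X.δ (1 : Fin 3) τ) ⁻¹' {f},
    φ (X.δ (2 : Fin 3) σ) * ψ (X.δ (0 : Fin 3) σ)

/-- The Möbius function `Φ_even - Φ_odd`. -/
noncomputable def muFun (X : SSet) : X _⦋1⦌ → ℚ :=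
  fun f => ∑ᶠ n : ℕ, (-1 : ℚ) ^ n *
    (Nat.card {σ : X.obj (op (SimplexCategory.mk n)) // Effective X σ ∧ X.map (longEdgeMap n).op σ = f} : ℚ)

/-- The category `Δ_inj`: objects those of the simplex category, morphisms the
injective monotone maps. -/
structure DeltaInj : Type where
  /-- the underlying object of the simplex category -/
  obj : SimplexCategory

instance : Category DeltaInj where
  Hom a b := {f : a.obj ⟶ b.obj // Function.Injective f.toOrderHom}
  id a := ⟨𝟙 a.obj, by
    rw [SimplexCategory.id_toOrderHom]
    exact fun x y h => h⟩
  comp f g := ⟨f.1 ≫ g.1, by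
    rw [SimplexCategory.comp_toOrderHom]
    exact fun x y h => f.2 (g.2 h)⟩
  id_comp f := by apply Subtype.ext; simp
  comp_id f := by apply Subtype.ext; simp
  assoc f g h := by apply Subtype.ext; simp

/-- The inclusion functor `Δ_inj ⊆ Δ`. -/
def DeltaInj.incl : DeltaInj ⥤ SimplexCategory where
  obj a := a.obj
  map f := f.1

/-- A *semi-decomposition space*: a semi-simplicial set carrying every pushout in
`Δ_inj` of a generic (inner) face map along a free (outer) face map to a pullback. -/
def IsSemiDecomposition (Z : DeltaInjᵒᵖ ⥤ Type) : Prop :=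
  ∀ ⦃a b c d : DeltaInj⦄ (g : a ⟶ b) (f : a ⟶ c) (h : b ⟶ d) (k : c ⟶ d),
    IsGeneric g.1 → IsFree f.1 → IsPushout g f h k →
    IsPullback (Z.map h.op) (Z.map k.op) (Z.map g.op) (Z.map f.op)

/-- A map of semi-simplicial sets is *ULF* if its naturality squares on all generic
face maps are pullbacks. -/
def IsULF {Z W : DeltaInjᵒᵖ ⥤ Type} (φ : Z ⟶ W) : Prop :=
  ∀ ⦃a b : DeltaInj⦄ (g : a ⟶ b), IsGeneric g.1 →
    IsPullback (φ.app (op b)) (Z.map g.op) (W.map g.op) (φ.app (op a))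

lemma conservative_id (X : SSet) : Conservative (𝟙 X) := by
  intro n i
  exact IsPullback.of_horiz_isIso ⟨by simp⟩

lemma conservative_comp {X Y Z : SSet} {f : X ⟶ Y} {g : Y ⟶ Z}
    (hf : Conservative f) (hg : Conservative g) : Conservative (f ≫ g) := by
  intro n i
  simpa using IsPullback.paste_horiz (hf n i) (hg n i)

lemma isCULF_id (X : SSet) : IsCULF (𝟙 X) := by
  intro a b gm hgm
  exact IsPullback.of_horiz_isIso ⟨by simp⟩

lemma isCULF_comp {X Y Z : SSet} {f : X ⟶ Y} {g : Y ⟶ Z}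
    (hf : IsCULF f) (hg : IsCULF g) : IsCULF (f ≫ g) := by
  intro a b gm hgm
  simpa using IsPullback.paste_horiz (hf gm hgm) (hg gm hgm)

lemma isULF_id (Z : DeltaInjᵒᵖ ⥤ Type) : IsULF (𝟙 Z) := by
  intro a b gm hgm
  exact IsPullback.of_horiz_isIso ⟨by simp⟩

lemma isULF_comp {X Y Z : DeltaInjᵒᵖ ⥤ Type} {f : X ⟶ Y} {g : Y ⟶ Z}
    (hf : IsULF f) (hg : IsULF g) : IsULF (f ≫ g) := by
  intro a b gm hgm
  simpa using IsPullback.paste_horiz (hf gm hgm) (hg gm hgm)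

/-- The category of split simplicial sets and conservative maps. -/
structure SplitSSet : Type 1 where
  /-- the underlying simplicial set -/
  X : SSet.{0}
  split : Split X

instance : Category SplitSSet where
  Hom A B := {f : A.X ⟶ B.X // Conservative f}
  id A := ⟨𝟙 A.X, conservative_id A.X⟩
  comp f g := ⟨f.1 ≫ g.1, conservative_comp f.2 g.2⟩
  id_comp f := by apply Subtype.ext; simp
  comp_id f := by apply Subtype.ext; simp
  assoc f g h := by apply Subtype.ext; simp

/-- The forgetful functor from split simplicial sets to simplicial sets. -/
def SplitSSet.forget : SplitSSet ⥤ SSet where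
  obj A := A.X
  map f := f.1

/-- The category of split decomposition spaces and cULF maps. -/
structure SplitDecomp : Type 1 where
  /-- the underlying simplicial set -/
  X : SSet.{0}
  split : Split X
  decomp : IsDecomposition X

instance : Category SplitDecomp where
  Hom A B := {f : A.X ⟶ B.X // IsCULF f}
  id A := ⟨𝟙 A.X, isCULF_id A.X⟩
  comp f g := ⟨f.1 ≫ g.1, isCULF_comp f.2 g.2⟩
  id_comp f := by apply Subtype.ext; simp
  comp_id f := by apply Subtype.ext; simp
  assoc f g h := by apply Subtype.ext; simp

/-- The forgetful functor from split decomposition spaces to simplicial sets. -/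
def SplitDecomp.forget : SplitDecomp ⥤ SSet where
  obj A := A.X
  map f := f.1

/-- The category of semi-decomposition spaces and ULF maps. -/
structure SemiDecomp : Type 1 where
  /-- the underlying semi-simplicial set -/
  Z : DeltaInjᵒᵖ ⥤ Type
  semidecomp : IsSemiDecomposition Z

instance : Category SemiDecomp where
  Hom A B := {φ : A.Z ⟶ B.Z // IsULF φ}
  id A := ⟨𝟙 A.Z, isULF_id A.Z⟩
  comp f g := ⟨f.1 ≫ g.1, isULF_comp f.2 g.2⟩
  id_comp f := by apply Subtype.ext; simp
  comp_id f := by apply Subtype.ext; simp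
  assoc f g h := by apply Subtype.ext; simp

/-- The forgetful functor from semi-decomposition spaces to semi-simplicial sets. -/
def SemiDecomp.forget : SemiDecomp ⥤ (DeltaInjᵒᵖ ⥤ Type) where
  obj A := A.Z
  map f := f.1

lemma sigma_apply {m : ℕ} (p : Fin (m + 1)) (j : Fin (m + 2)) :
    (((SimplexCategory.σ p).toOrderHom j : Fin (m+1)) : ℕ) = if p.1 < j.1 then j.1 - 1 else j.1 := by
  dsimp [SimplexCategory.σ, SimplexCategory.mkHom]
  show ((p.predAbove j : Fin (m+1)) : ℕ) = _
  unfold Fin.predAbove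
  split
  · rename_i h
    rw [Fin.lt_def, Fin.coe_castSucc] at h
    rw [Fin.coe_pred, if_pos h]
  · rename_i h
    rw [Fin.lt_def, Fin.coe_castSucc] at h
    rw [Fin.coe_castPred, if_neg (by omega)]

lemma delta_apply {m : ℕ} (p : Fin (m + 2)) (j : Fin (m + 1)) :
    (((SimplexCategory.δ p).toOrderHom j : Fin (m+2)) : ℕ) = if j.1 < p.1 then j.1 else j.1 + 1 := by
  dsimp [SimplexCategory.δ, SimplexCategory.mkHom, Fin.succAboveOrderEmb]
  show ((p.succAbove j : Fin (m+2)) : ℕ) = _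
  unfold Fin.succAbove
  split
  · rename_i h
    rw [Fin.lt_def, Fin.coe_castSucc] at h
    rw [Fin.coe_castSucc, if_pos h]
  · rename_i h
    rw [Fin.lt_def, Fin.coe_castSucc] at h
    rw [Fin.val_succ, if_neg (by omega)]

lemma pe_apply (n : ℕ) (i : Fin n) (j : Fin 2) :
    (((principalEdge n i).toOrderHom j : Fin (n+1)) : ℕ) = i.1 + j.1 := rfl

lemma pe_free (n : ℕ) (i : Fin (n + 1)) : IsFree (principalEdge (n + 1) i) := by
  intro j
  rw [pe_apply, pe_apply]
  simp

lemma vm_apply (n : ℕ) (i : Fin (n + 1)) (j : Fin 1) :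
    ((vertexMap n i).toOrderHom j : Fin (n+1)) = i := rfl

lemma fin1_eq {a b : Fin (⦋0⦌.len + 1)} : a = b := by
  have h : ⦋0⦌.len = 0 := rfl
  have ha := a.2
  have hb := b.2
  apply Fin.ext
  omega

lemma coe_fin2_zero : ((0 : Fin 2) : ℕ) = 0 := rfl
lemma coe_fin2_one : ((1 : Fin 2) : ℕ) = 1 := rfl

lemma sq_comm (n : ℕ) (i : Fin (n + 1)) :
    SimplexCategory.σ (0 : Fin 1) ≫ vertexMap n i
      = principalEdge (n + 1) i ≫ SimplexCategory.σ i := by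
  apply SimplexCategory.Hom.ext
  apply OrderHom.ext
  funext j
  apply Fin.ext
  rw [SimplexCategory.comp_toOrderHom, SimplexCategory.comp_toOrderHom]
  simp only [OrderHom.comp_coe, Function.comp_apply]
  have h1 : (((vertexMap n i).toOrderHom ((SimplexCategory.σ (0 : Fin 1)).toOrderHom j)) : ℕ)
      = i.1 := rfl
  have h2 := sigma_apply i ((principalEdge (n+1) i).toOrderHom j)
  have h3 := pe_apply (n+1) i j
  rw [h3] at h2
  have hj := j.2
  split at h2 <;> omega

lemma pushout_sigma (n : ℕ) (i : Fin (n + 1)) :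
    IsPushout (SimplexCategory.σ (0 : Fin 1)) (principalEdge (n + 1) i)
      (vertexMap n i) (SimplexCategory.σ i) := by
  apply IsPushout.of_isColimit' ⟨sq_comm n i⟩
  apply PushoutCocone.IsColimit.mk
  case desc => exact fun s => SimplexCategory.δ i.castSucc ≫ s.inr
  case fac_left =>
    intro s
    have c1 := congrArg (fun φ : (⦋1⦌ : SimplexCategory) ⟶ s.pt =>
      φ.toOrderHom (1 : Fin 2)) s.condition
    simp only [SimplexCategory.comp_toOrderHom, OrderHom.comp_coe, Function.comp_apply] at c1
    apply SimplexCategory.Hom.ext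
    apply OrderHom.ext
    funext j
    rw [SimplexCategory.comp_toOrderHom, SimplexCategory.comp_toOrderHom]
    simp only [OrderHom.comp_coe, Function.comp_apply]
    have harg : (SimplexCategory.δ i.castSucc).toOrderHom ((vertexMap n i).toOrderHom j)
        = (principalEdge (n+1) i).toOrderHom (1 : Fin 2) := by
      apply Fin.ext
      rw [vm_apply, delta_apply, pe_apply, Fin.coe_castSucc, if_neg (lt_irrefl _), coe_fin2_one]
    rw [harg, ← c1]
    exact congrArg _ fin1_eq
  case fac_right =>
    intro s
    have c0 := congrArg (fun φ : (⦋1⦌ : SimplexCategory) ⟶ s.pt =>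
      φ.toOrderHom (0 : Fin 2)) s.condition
    have c1 := congrArg (fun φ : (⦋1⦌ : SimplexCategory) ⟶ s.pt =>
      φ.toOrderHom (1 : Fin 2)) s.condition
    simp only [SimplexCategory.comp_toOrderHom, OrderHom.comp_coe, Function.comp_apply] at c0 c1
    have key : s.inr.toOrderHom ((principalEdge (n+1) i).toOrderHom (0 : Fin 2))
        = s.inr.toOrderHom ((principalEdge (n+1) i).toOrderHom (1 : Fin 2)) := by
      rw [← c0, ← c1]
      exact congrArg _ fin1_eq
    apply SimplexCategory.Hom.ext
    apply OrderHom.ext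
    funext j
    rw [SimplexCategory.comp_toOrderHom, SimplexCategory.comp_toOrderHom]
    simp only [OrderHom.comp_coe, Function.comp_apply]
    by_cases hj : (j : ℕ) = i.1
    · have hs : (((SimplexCategory.σ i).toOrderHom j) : ℕ) = j.1 := by
        rw [sigma_apply]
        exact if_neg (by omega)
      have e1 : (SimplexCategory.δ i.castSucc).toOrderHom ((SimplexCategory.σ i).toOrderHom j)
          = (principalEdge (n+1) i).toOrderHom (1 : Fin 2) := by
        apply Fin.ext
        rw [delta_apply, hs, Fin.coe_castSucc, if_neg (by omega), pe_apply, coe_fin2_one]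
        omega
      have e2 : j = (principalEdge (n+1) i).toOrderHom (0 : Fin 2) := by
        apply Fin.ext
        rw [pe_apply, coe_fin2_zero]
        omega
      rw [e1, e2, key]
    · have e : (SimplexCategory.δ i.castSucc).toOrderHom ((SimplexCategory.σ i).toOrderHom j)
          = j := by
        apply Fin.ext
        by_cases hc : i.1 < j.1
        · have hs : (((SimplexCategory.σ i).toOrderHom j) : ℕ) = j.1 - 1 := by
            rw [sigma_apply]
            exact if_pos hc
          rw [delta_apply, hs, Fin.coe_castSucc, if_neg (by omega)]
          omega
        · have hs : (((SimplexCategory.σ i).toOrderHom j) : ℕ) = j.1 := by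
            rw [sigma_apply]
            exact if_neg hc
          rw [delta_apply, hs, Fin.coe_castSucc, if_pos (by omega)]
      rw [e]
  case uniq =>
    intro s m hl hr
    have h : m = (SimplexCategory.δ i.castSucc ≫ SimplexCategory.σ i) ≫ m := by
      rw [SimplexCategory.δ_comp_σ_self, Category.id_comp]
    rw [h, Category.assoc, hr]

lemma edge_of_degen (X : SSet) {n : ℕ} (i : Fin (n + 1)) (y : X _⦋n⦌) :
    X.map (principalEdge (n + 1) i).op (X.σ i y)
      = X.σ (0 : Fin 1) (X.map (vertexMap n i).op y) := by
  have h := sq_comm n i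
  change X.map (principalEdge (n+1) i).op (X.map (SimplexCategory.σ i).op y) = _
  rw [← FunctorToTypes.map_comp_apply, ← op_comp, ← h, op_comp, FunctorToTypes.map_comp_apply]
  rfl

universe uX

lemma degen_of_edge {X : SSet.{uX}} (hX : Stiff X) {n : ℕ} (i : Fin (n + 1)) (σ : X _⦋n+1⦌)
    (h : X.map (principalEdge (n + 1) i).op σ ∈ Set.range (X.σ (0 : Fin 1))) :
    σ ∈ Set.range (X.σ i) := by
  obtain ⟨x, hx⟩ := h
  have P := hX 0 0 (principalEdge (n+1) i) (vertexMap n i) (SimplexCategory.σ i)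
    (pe_free n i) (pushout_sigma n i)
  let a : PUnit.{uX+1} ⟶ X _⦋0⦌ := TypeCat.ofHom (fun _ => x)
  let b : PUnit.{uX+1} ⟶ X _⦋n+1⦌ := TypeCat.ofHom (fun _ => σ)
  have w : a ≫ X.map (SimplexCategory.σ (0 : Fin 1)).op
      = b ≫ X.map (principalEdge (n+1) i).op := by ext; exact hx
  exact ⟨P.lift a b w PUnit.unit, ConcreteCategory.congr_hom (P.lift_snd a b w) PUnit.unit⟩

lemma edge_cond_of_conservative {Y X : SSet.{uX}} {f : Y ⟶ X} (hc : Conservative f) :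
    ∀ σ : Y _⦋1⦌, σ ∉ Set.range (Y.σ (0 : Fin 1)) →
      f.app (op (SimplexCategory.mk 1)) σ ∉ Set.range (X.σ (0 : Fin 1)) := by
  intro σ hσ hmem
  obtain ⟨x, hx⟩ := hmem
  have P := hc 0 0
  let a : PUnit.{uX+1} ⟶ X _⦋0⦌ := TypeCat.ofHom (fun _ => x)
  let b : PUnit.{uX+1} ⟶ Y _⦋1⦌ := TypeCat.ofHom (fun _ => σ)
  have w : a ≫ X.σ (0 : Fin 1) = b ≫ f.app (op (SimplexCategory.mk 1)) := by ext; exact hx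
  exact hσ ⟨P.lift a b w PUnit.unit, ConcreteCategory.congr_hom (P.lift_snd a b w) PUnit.unit⟩

lemma conservative_of_edge {Y X : SSet} (hY : Stiff Y) (hYc : Complete Y) (hXc : Complete X)
    (f : Y ⟶ X)
    (h3 : ∀ σ : Y _⦋1⦌, σ ∉ Set.range (Y.σ (0 : Fin 1)) →
      f.app (op (SimplexCategory.mk 1)) σ ∉ Set.range (X.σ (0 : Fin 1))) :
    Conservative f := by
  intro n i
  have w : f.app (op (SimplexCategory.mk n)) ≫ X.σ i
      = Y.σ i ≫ f.app (op (SimplexCategory.mk (n+1))) :=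
    (f.naturality (SimplexCategory.σ i).op).symm
  refine IsPullback.of_isLimit' ⟨w⟩ ?_
  refine (PullbackCone.isLimitEquivBijective _).symm ⟨?_, ?_⟩
  · intro y₁ y₂ hy
    exact hYc n i (congrArg (fun p => p.1.2) hy)
  · rintro ⟨⟨τ, σ⟩, hp⟩
    have hnat : f.app (op (SimplexCategory.mk 1)) (Y.map (principalEdge (n+1) i).op σ)
        = X.map (principalEdge (n+1) i).op (f.app (op (SimplexCategory.mk (n+1))) σ) :=
      NatTrans.naturality_apply f (principalEdge (n+1) i).op σ
    have hedge : f.app (op (SimplexCategory.mk 1)) (Y.map (principalEdge (n+1) i).op σ)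
        ∈ Set.range (X.σ (0 : Fin 1)) := by
      rw [hnat, ← hp]
      exact ⟨X.map (vertexMap n i).op τ, (edge_of_degen X i τ).symm⟩
    have hdeg : Y.map (principalEdge (n+1) i).op σ ∈ Set.range (Y.σ (0 : Fin 1)) := by
      by_contra hcon
      exact h3 _ hcon hedge
    obtain ⟨y, hy⟩ := degen_of_edge hY i σ hdeg
    have hfy : f.app (op (SimplexCategory.mk n)) y = τ := by
      apply hXc n i
      have hw : X.σ i (f.app (op (SimplexCategory.mk n)) y)
          = f.app (op (SimplexCategory.mk (n+1))) (Y.σ i y) := ConcreteCategory.congr_hom w y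
      rw [hw, hy]
      exact hp.symm
    exact ⟨y, Subtype.ext (Prod.ext hfy hy)⟩

lemma pe_one (i : Fin 1) : principalEdge 1 i = 𝟙 (⦋1⦌ : SimplexCategory) := by
  apply SimplexCategory.Hom.ext
  apply OrderHom.ext
  funext j
  apply Fin.ext
  have hi : i.1 = 0 := by omega
  rw [pe_apply, hi]
  simp

lemma word_of_edge {Y X : SSet} (f : Y ⟶ X)
    (h3 : ∀ σ : Y _⦋1⦌, σ ∉ Set.range (Y.σ (0 : Fin 1)) →
      f.app (op (SimplexCategory.mk 1)) σ ∉ Set.range (X.σ (0 : Fin 1))) :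
    ∀ (n : ℕ) (w : Fin n → Letter), (∀ i, w i ≠ Letter.o) →
      ∀ σ ∈ wordSet Y w, f.app (op (SimplexCategory.mk n)) σ ∈ wordSet X w := by
  intro n w hw σ hσ i
  have hnat : f.app (op (SimplexCategory.mk 1)) (Y.map (principalEdge n i).op σ)
      = X.map (principalEdge n i).op (f.app (op (SimplexCategory.mk n)) σ) :=
    NatTrans.naturality_apply f (principalEdge n i).op σ
  have hi := hσ i
  cases hcase : w i with
  | o => exact absurd hcase (hw i)
  | z =>
    rw [hcase] at hi
    simp only [edgeSet] at hi ⊢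
    obtain ⟨y, hy⟩ := hi
    refine ⟨f.app (op (SimplexCategory.mk 0)) y, ?_⟩
    have hs : X.σ (0 : Fin 1) (f.app (op (SimplexCategory.mk 0)) y)
        = f.app (op (SimplexCategory.mk 1)) (Y.σ (0 : Fin 1) y) :=
      (NatTrans.naturality_apply f (SimplexCategory.σ (0 : Fin 1)).op y).symm
    rw [hs, hy]
    exact hnat
  | a =>
    rw [hcase] at hi
    simp only [edgeSet, Set.mem_compl_iff] at hi ⊢
    intro hmem
    refine h3 _ hi ?_
    rw [hnat]
    exact hmem

lemma edge_of_word {Y X : SSet} (f : Y ⟶ X)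
    (h2 : ∀ (n : ℕ) (w : Fin n → Letter), (∀ i, w i ≠ Letter.o) →
      ∀ σ ∈ wordSet Y w, f.app (op (SimplexCategory.mk n)) σ ∈ wordSet X w) :
    ∀ σ : Y _⦋1⦌, σ ∉ Set.range (Y.σ (0 : Fin 1)) →
      f.app (op (SimplexCategory.mk 1)) σ ∉ Set.range (X.σ (0 : Fin 1)) := by
  intro σ hσ
  have hmem : σ ∈ wordSet Y (fun _ : Fin 1 => Letter.a) := by
    intro i
    rw [pe_one i]
    simpa [edgeSet] using hσ
  have h := h2 1 (fun _ => Letter.a) (fun i h => by simp at h) σ hmem (0 : Fin 1)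
  rw [pe_one 0] at h
  simpa [edgeSet] using h


theorem statement12 (Y X : SSet) (hY : Stiff Y) (hYc : Complete Y)
    (hX : Stiff X) (hXc : Complete X) (f : Y ⟶ X) :
    (Conservative f ↔ ∀ (n : ℕ) (w : Fin n → Letter), (∀ i, w i ≠ Letter.o) →
      ∀ σ ∈ wordSet Y w, f.app (op (SimplexCategory.mk n)) σ ∈ wordSet X w) ∧
    ((∀ (n : ℕ) (w : Fin n → Letter), (∀ i, w i ≠ Letter.o) →
      ∀ σ ∈ wordSet Y w, f.app (op (SimplexCategory.mk n)) σ ∈ wordSet X w) ↔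
      ∀ σ : Y _⦋1⦌, σ ∉ Set.range (Y.σ (0 : Fin 1)) →
        f.app (op (SimplexCategory.mk 1)) σ ∉ Set.range (X.σ (0 : Fin 1))) := by
  refine ⟨⟨fun h => word_of_edge f (edge_cond_of_conservative h), fun h =>
    conservative_of_edge hY hYc hXc f (edge_of_word f h)⟩,
    ⟨fun h => edge_of_word f h, fun h => word_of_edge f h⟩⟩
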